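/- Let (f⁰, f¹) : X → Y be a morphism in F^mp(A; ω) (d⁰ injective, X¹, Y¹ projective components). Then Cok⁰(f⁰, f¹) = 0 if and only if (f⁰, f¹) factors through θ⁰(P) for some projective A-module P. -/

import Mathlib

/-!
STATEMENT 17: Let `(f⁰, f¹) : X → Y` be a morphism in `F^mp(A; ω)` (both `d⁰`'s
injective, both `X¹, Y¹` projective).  Then `Cok⁰(f⁰, f¹) = 0` (equivalently, the
image of `f¹` is contained in the image of `d⁰_Y`) if and only if `(f⁰, f¹)` factors
through `θ⁰(P)` for some projective `A`-module `P`.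
-/

universe u v

/-- A module factorization `X = (X⁰, X¹; d⁰, d¹)` of `ω` over `A`: `d⁰ : X⁰ → X¹` is
`A`-linear and `d¹ : X¹ → ᵗ(X⁰)` is `A`-linear, i.e. `d¹ : X¹ → X⁰` is
`σ`-semilinear, with `d¹ ∘ d⁰ = ω_{X⁰}` and `ᵗ(d⁰) ∘ d¹ = ω_{X¹}`. -/
structure MFact (A : Type u) [Ring A] (ω : A) (σ : A ≃+* A) : Type (max u (v + 1)) where
  X0 : ModuleCat.{v} A
  X1 : ModuleCat.{v} A
  d0 : X0 →ₗ[A] X1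
  d1 : X1 →ₛₗ[(σ : A →+* A)] X0
  comp01 : ∀ x : X0, d1 (d0 x) = ω • x
  comp10 : ∀ x : X1, d0 (d1 x) = ω • x

variable {A : Type u} [Ring A] {ω : A} {σ : A ≃+* A}

/-- A morphism of module factorizations. -/
@[ext] structure MFactHom (X Y : MFact.{u, v} A ω σ) where
  f0 : X.X0 →ₗ[A] Y.X0
  f1 : X.X1 →ₗ[A] Y.X1
  comm0 : ∀ x : X.X0, f1 (X.d0 x) = Y.d0 (f0 x)
  comm1 : ∀ x : X.X1, f0 (X.d1 x) = Y.d1 (f1 x)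

/-- Composition of morphisms of module factorizations. -/
def MFactHom.comp {X Y Z : MFact.{u, v} A ω σ} (g : MFactHom Y Z) (f : MFactHom X Y) :
    MFactHom X Z where
  f0 := g.f0 ∘ₗ f.f0
  f1 := g.f1 ∘ₗ f.f1
  comm0 := fun x => by
    simp only [LinearMap.comp_apply, f.comm0 x, g.comm0 (f.f0 x)]
  comm1 := fun x => by
    simp only [LinearMap.comp_apply, f.comm1 x, g.comm1 (f.f1 x)]

variable (ω σ)

/-- The trivial module factorization `θ⁰(M) = (M, M; Id_M, ω_M)`. -/
def theta0 (hσ : ∀ a : A, ω * a = σ a * ω)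
    (M : Type v) [AddCommGroup M] [Module A M] : MFact.{u, v} A ω σ where
  X0 := ModuleCat.of A M
  X1 := ModuleCat.of A M
  d0 := LinearMap.id
  d1 :=
    { toFun := fun m => ω • m
      map_add' := fun x y => smul_add ω x y
      map_smul' := fun a m => by
        simp only [RingHom.coe_coe]
        rw [smul_smul, smul_smul, hσ] }
  comp01 := fun x => rfl
  comp10 := fun x => rfl

theorem cok0_eq_zero_iff_factors_through_theta0
    {A : Type u} [Ring A] (ω : A) (σ : A ≃+* A)
    (hσ : ∀ a : A, ω * a = σ a * ω)
    (hreg : ∀ a : A, a * ω = 0 → a = 0) (hreg' : ∀ a : A, ω * a = 0 → a = 0)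
    (X Y : MFact.{u, v} A ω σ)
    (hX1 : Module.Projective A X.X1) (hX0 : Function.Injective X.d0)
    (hY1 : Module.Projective A Y.X1) (hY0 : Function.Injective Y.d0)
    (f : MFactHom X Y) :
    -- `Cok⁰(f) = 0`, i.e. the image of `f¹` lands in the image of `d⁰_Y`
    (∀ x : X.X1, ∃ y : Y.X0, f.f1 x = Y.d0 y) ↔
    (∃ P : Type v, ∃ (_ : AddCommGroup P) (_ : Module A P), Module.Projective A P ∧
      ∃ (u : MFactHom X (theta0 ω σ hσ P)) (v : MFactHom (theta0 ω σ hσ P) Y),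
        (∀ x : X.X0, f.f0 x = (v.comp u).f0 x) ∧
        (∀ x : X.X1, f.f1 x = (v.comp u).f1 x)) := by
  constructor
  · intro h
    refine ⟨X.X1, inferInstance, inferInstance, hX1, ?_⟩
    choose g hg using h
    let G : X.X1 →ₗ[A] Y.X0 :=
      { toFun := g
        map_add' := fun x y => hY0 (by rw [← hg, map_add, map_add, ← hg, ← hg])
        map_smul' := fun a x => hY0 (by
          simp only [RingHom.id_apply, map_smul, ← hg]) }
    have hG : ∀ x : X.X1, f.f1 x = Y.d0 (G x) := hg
    refine ⟨⟨X.d0, LinearMap.id, fun x => rfl, fun x => X.comp10 x⟩,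
      ⟨G, f.f1, fun m => hG m, fun m => hY0 ?_⟩, fun x => hY0 ?_, fun x => rfl⟩
    · show Y.d0 (G (ω • m)) = Y.d0 (Y.d1 (f.f1 m))
      exact (hG (ω • m)).symm.trans ((f.f1.map_smul ω m).trans (Y.comp10 (f.f1 m)).symm)
    · show Y.d0 (f.f0 x) = Y.d0 (G (X.d0 x))
      rw [← hG, f.comm0]
  · rintro ⟨P, _, _, _, u, v, h0, h1⟩
    intro x
    refine ⟨v.f0 (u.f1 x), ?_⟩
    rw [h1]
    exact v.comm0 (u.f1 x)
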